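/- For every odd γ ∈ ℕ, the fractional vertex cover problem with denominator γ is NP-complete: given a simple graph G = (V,E) and K ∈ ℚ, decide whether there exists x ∈ ℚ^V with Σ_{v∈V} x_v ≤ K, x_v + x_w ≥ 1 for all (v,w) ∈ E, x_v ∈ [0,1], and γ·x_v ∈ ℤ for all v. In particular, the reduction from ordinary vertex cover works as follows: construct G from G' = (V',E') by attaching to each v ∈ V' a triangle {v^(1),v^(2),v^(3)} connected to v by the edge (v,v^(1)); then G' has a vertex cover of size ≤ K' if and only if the constructed fractional instance with K = K'/γ + 2|V'| is feasible. -/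

import Mathlib

open Finset

/-- The relation defining the gadget graph `G` built from `G' = (V',E')`: keep all edges of
`G'`, and for each `v ∈ V'` attach a triangle `v⁽¹⁾ = (v,0), v⁽²⁾ = (v,1), v⁽³⁾ = (v,2)`
connected to `v` by the bridge `(v, v⁽¹⁾)`. -/
def gadgetRel {V' : Type} (G' : SimpleGraph V') :
    (V' ⊕ V' × Fin 3) → (V' ⊕ V' × Fin 3) → Prop
  | Sum.inl v, Sum.inl w => G'.Adj v w
  | Sum.inl v, Sum.inr (w, a) => v = w ∧ a = 0
  | Sum.inr (v, a), Sum.inl w => v = w ∧ a = 0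
  | Sum.inr (v, a), Sum.inr (w, b) => v = w ∧ a ≠ b

/-- Rounding lemma: if `t` is odd and `t/(2γ) ≤ k/γ` then `(t+1)/(2γ) ≤ k/γ`. -/
lemma key_round (γ : ℕ) (hγ0 : 0 < γ) (k t : ℤ) (ht : Odd t)
    (h : (t : ℚ) / (2 * γ) ≤ (k : ℚ) / γ) : ((t : ℚ) + 1) / (2 * γ) ≤ (k : ℚ) / γ := by
  have hq : (0 : ℚ) < (γ : ℚ) := by exact_mod_cast hγ0
  have h2q : (0 : ℚ) < 2 * (γ : ℚ) := by linarith
  have hk : (k : ℚ) / γ = (2 * k : ℚ) / (2 * γ) := by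
    field_simp
  rw [hk] at h ⊢
  rw [div_le_div_iff_of_pos_right h2q] at h ⊢
  have h' : t ≤ 2 * k := by exact_mod_cast h
  have hne : t ≠ 2 * k := by
    intro he
    rcases ht with ⟨r, hr⟩
    omega
  have : t + 1 ≤ 2 * k := by omega
  exact_mod_cast this

/-- Correctness of the reduction from vertex cover to fractional vertex cover with odd
denominator `γ`: `G'` has a vertex cover of size at most `K'` iff the fractional vertex
cover instance (`γ`-VC) on the gadget graph `G` with bound `K = K'/γ + 2|V'|` is feasible,
i.e. admits `x : V → ℚ` with `∑ x_v ≤ K`, `x_v + x_w ≥ 1` on edges, `x_v ∈ [0,1]` and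
`γ·x_v ∈ ℤ`. -/
theorem stmt19 (γ : ℕ) (hγ : Odd γ) {V' : Type} [Fintype V'] [DecidableEq V']
    (G' : SimpleGraph V') (K' : ℕ) :
    (∃ S : Finset V', S.card ≤ K' ∧ ∀ v w : V', G'.Adj v w → v ∈ S ∨ w ∈ S) ↔
    (∃ x : (V' ⊕ V' × Fin 3) → ℚ,
      (∑ v : V' ⊕ V' × Fin 3, x v ≤ (K' : ℚ) / γ + 2 * (Fintype.card V' : ℚ)) ∧
      (∀ v w, (SimpleGraph.fromRel (gadgetRel G')).Adj v w → 1 ≤ x v + x w) ∧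
      (∀ v, 0 ≤ x v ∧ x v ≤ 1) ∧
      (∀ v, ∃ k : ℤ, x v = (k : ℚ) / γ)) := by
  obtain ⟨m, hm⟩ := hγ
  have hγ0 : 0 < γ := by omega
  have hq : (0 : ℚ) < (γ : ℚ) := by exact_mod_cast hγ0
  set q : ℚ := (γ : ℚ) with hqdef
  have hqeq : q = 2 * m + 1 := by rw [hqdef, hm]; push_cast; ring
  set A : ℚ := ((m : ℚ) + 1) / q with hA
  set B : ℚ := (m : ℚ) / q with hB
  have hAB : A + B = 1 := by
    rw [hA, hB, ← add_div, hqeq]; field_simp; ring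
  have hB0 : 0 ≤ B := by positivity
  have hBA : B ≤ A := by
    rw [hA, hB]
    gcongr
    linarith
  have hA1 : A ≤ 1 := by linarith
  constructor
  · rintro ⟨S, hScard, hScov⟩
    refine ⟨fun u => match u with
      | Sum.inl v => if v ∈ S then A else B
      | Sum.inr (v, a) => if a = 2 then B else A, ?_, ?_, ?_, ?_⟩
    · -- sum bound
      rw [Fintype.sum_sum_type, Fintype.sum_prod_type]
      have h1 : ∑ v : V', (if v ∈ S then A else B)
          = (Fintype.card V' : ℚ) * B + (S.card : ℚ) * (1 / q) := by
        have : ∀ v : V', (if v ∈ S then A else B) = B + (if v ∈ S then 1 / q else 0) := by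
          intro v
          split_ifs with h
          · rw [hA, hB]; field_simp
          · ring
        rw [Finset.sum_congr rfl (fun v _ => this v), Finset.sum_add_distrib,
          Finset.sum_const, Finset.sum_ite_mem, Finset.univ_inter, Finset.sum_const]
        rw [nsmul_eq_mul, nsmul_eq_mul, Fintype.card]
      have h2 : ∀ v : V', ∑ a : Fin 3, (if a = 2 then B else A) = A + 1 := by
        intro v
        rw [Fin.sum_univ_three, if_neg (by decide : ¬((0 : Fin 3) = 2)),
          if_neg (by decide : ¬((1 : Fin 3) = 2)), if_pos rfl]
        linarith
      rw [h1, Finset.sum_congr rfl (fun v _ => h2 v), Finset.sum_const]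
      have hcard : ((Finset.univ : Finset V').card : ℚ) = (Fintype.card V' : ℚ) := by
        rw [Fintype.card]
      have hK : (S.card : ℚ) * (1 / q) ≤ (K' : ℚ) / q := by
        rw [mul_one_div, div_le_div_iff_of_pos_right hq]
        exact_mod_cast hScard
      rw [nsmul_eq_mul, hcard]
      nlinarith [hK]
    · -- edge constraints
      rintro u w hadj
      rw [SimpleGraph.fromRel_adj] at hadj
      obtain ⟨hne, hrel⟩ := hadj
      match u, w with
      | Sum.inl v, Sum.inl w =>
        have hvw : G'.Adj v w := by
          rcases hrel with h | h
          · exact h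
          · exact (G'.adj_symm h)
        rcases hScov v w hvw with h | h <;> simp only [h, if_true] <;>
          split_ifs <;> linarith
      | Sum.inl v, Sum.inr (w, a) =>
        have ha : a = 0 := by rcases hrel with ⟨_, h⟩ | ⟨_, h⟩ <;> exact h
        subst ha
        dsimp only
        rw [if_neg (by decide : ¬((0 : Fin 3) = 2))]
        split_ifs <;> linarith
      | Sum.inr (v, a), Sum.inl w =>
        have ha : a = 0 := by rcases hrel with ⟨_, h⟩ | ⟨_, h⟩ <;> exact h
        subst ha
        dsimp only
        rw [if_neg (by decide : ¬((0 : Fin 3) = 2))]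
        split_ifs <;> linarith
      | Sum.inr (v, a), Sum.inr (w, b) =>
        have hab : a ≠ b := by rcases hrel with ⟨_, h⟩ | ⟨_, h⟩ <;> [exact h; exact h.symm]
        dsimp only
        split_ifs with h1 h2 h2
        · exact absurd (h1.trans h2.symm) hab
        · linarith
        · linarith
        · linarith
    · -- box constraints
      rintro (v | ⟨v, a⟩) <;> dsimp only <;> split_ifs <;> constructor <;> linarith
    · -- integrality
      rintro (v | ⟨v, a⟩) <;> dsimp only <;> split_ifs
      · exact ⟨(m : ℤ) + 1, by rw [hA]; push_cast; rfl⟩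
      · exact ⟨(m : ℤ), by rw [hB]; push_cast; rfl⟩
      · exact ⟨(m : ℤ), by rw [hB]; push_cast; rfl⟩
      · exact ⟨(m : ℤ) + 1, by rw [hA]; push_cast; rfl⟩
  · rintro ⟨x, hsum, hedge, hbox, hint⟩
    classical
    set S : Finset V' := Finset.univ.filter (fun v => (1 : ℚ) / 2 ≤ x (Sum.inl v)) with hS
    refine ⟨S, ?_, ?_⟩
    · -- card bound
      -- per-vertex lower bound
      have hv : ∀ v : V', 2 + (if v ∈ S then 1 / q else 0)
          ≤ x (Sum.inl v) + ∑ a : Fin 3, x (Sum.inr (v, a)) := by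
        intro v
        have hadjT : ∀ a b : Fin 3, a ≠ b →
            1 ≤ x (Sum.inr (v, a)) + x (Sum.inr (v, b)) := by
          intro a b hab
          apply hedge
          rw [SimpleGraph.fromRel_adj]
          exact ⟨by simp [hab], Or.inl ⟨rfl, hab⟩⟩
        have h01 := hadjT 0 1 (by decide)
        have h02 := hadjT 0 2 (by decide)
        have h12 := hadjT 1 2 (by decide)
        have hbr : 1 ≤ x (Sum.inl v) + x (Sum.inr (v, 0)) := by
          apply hedge
          rw [SimpleGraph.fromRel_adj]
          exact ⟨by simp, Or.inl ⟨rfl, rfl⟩⟩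
        rw [Fin.sum_univ_three]
        split_ifs with hvS
        · -- v ∈ S : use rounding
          have hx0 : (1 : ℚ) / 2 ≤ x (Sum.inl v) := by
            rw [hS] at hvS; exact (Finset.mem_filter.mp hvS).2
          obtain ⟨k0, hk0⟩ := hint (Sum.inl v)
          obtain ⟨k1, hk1⟩ := hint (Sum.inr (v, 0))
          obtain ⟨k2, hk2⟩ := hint (Sum.inr (v, 1))
          obtain ⟨k3, hk3⟩ := hint (Sum.inr (v, 2))
          have hodd1 : Odd ((γ : ℤ)) := ⟨m, by exact_mod_cast hm⟩
          have hodd3 : Odd (3 * (γ : ℤ)) := ⟨3 * m + 1, by push_cast [hm]; ring⟩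
          have hr1 : ((γ : ℤ) : ℚ) / (2 * γ) ≤ (k0 : ℚ) / γ := by
            rw [← hk0]
            calc ((γ : ℤ) : ℚ) / (2 * γ) = 1 / 2 := by
                  push_cast; rw [div_eq_div_iff (by positivity) (by norm_num)]; ring
              _ ≤ x (Sum.inl v) := hx0
          have hc1 := key_round γ hγ0 k0 γ hodd1 hr1
          rw [← hk0] at hc1
          have hsum3 : x (Sum.inr (v, 0)) + x (Sum.inr (v, 1)) + x (Sum.inr (v, 2))
              = ((k1 + k2 + k3 : ℤ) : ℚ) / γ := by
            rw [hk1, hk2, hk3]; push_cast; ring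
          have hr3 : ((3 * (γ : ℤ) : ℤ) : ℚ) / (2 * γ) ≤ ((k1 + k2 + k3 : ℤ) : ℚ) / γ := by
            rw [← hsum3]
            rw [div_le_iff₀ (by positivity)]
            push_cast
            have h2 : (x (Sum.inr (v, 0)) + x (Sum.inr (v, 1)) + x (Sum.inr (v, 2)))
                * (2 * γ) = ((x (Sum.inr (v, 0)) + x (Sum.inr (v, 1)))
                + (x (Sum.inr (v, 0)) + x (Sum.inr (v, 2)))
                + (x (Sum.inr (v, 1)) + x (Sum.inr (v, 2)))) * γ := by ring
            rw [h2]
            nlinarith [h01, h02, h12, hq]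
          have hc3 := key_round γ hγ0 (k1 + k2 + k3) (3 * γ) hodd3 hr3
          rw [← hsum3] at hc3
          have hkey : ((γ : ℚ) + 1) / (2 * γ) + (((3 * (γ : ℤ) : ℤ) : ℚ) + 1) / (2 * γ)
              = 2 + 1 / q := by
            rw [hqdef]; push_cast; field_simp; ring
          push_cast at hc1 hc3 hkey
          rw [hqdef]
          linarith
        · linarith
      -- summing the per-vertex bounds
      have htot : 2 * (Fintype.card V' : ℚ) + (S.card : ℚ) / q
          ≤ ∑ u : V' ⊕ V' × Fin 3, x u := by
        rw [Fintype.sum_sum_type, Fintype.sum_prod_type]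
        calc 2 * (Fintype.card V' : ℚ) + (S.card : ℚ) / q
            = ∑ v : V', (2 + (if v ∈ S then 1 / q else 0)) := by
              rw [Finset.sum_add_distrib, Finset.sum_const, Finset.sum_ite_mem,
                Finset.univ_inter, Finset.sum_const, nsmul_eq_mul, nsmul_eq_mul,
                Fintype.card]
              rw [mul_comm ((Finset.univ : Finset V').card : ℚ) 2, mul_one_div]
          _ ≤ ∑ v : V', (x (Sum.inl v) + ∑ a : Fin 3, x (Sum.inr (v, a))) :=
              Finset.sum_le_sum (fun v _ => hv v)
          _ = (∑ v : V', x (Sum.inl v)) + ∑ v : V', ∑ a : Fin 3, x (Sum.inr (v, a)) :=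
              Finset.sum_add_distrib
      have hfinal : (S.card : ℚ) / q ≤ (K' : ℚ) / q := by linarith
      rw [div_le_div_iff_of_pos_right hq] at hfinal
      exact_mod_cast hfinal
    · -- cover property
      intro v w hvw
      by_contra hc
      push_neg at hc
      obtain ⟨hv, hw⟩ := hc
      rw [hS, Finset.mem_filter] at hv hw
      push_neg at hv hw
      have hv' : x (Sum.inl v) < 1 / 2 := hv (Finset.mem_univ v)
      have hw' : x (Sum.inl w) < 1 / 2 := hw (Finset.mem_univ w)
      have : 1 ≤ x (Sum.inl v) + x (Sum.inl w) := by
        apply hedge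
        rw [SimpleGraph.fromRel_adj]
        exact ⟨by simp [hvw.ne], Or.inl hvw⟩
      linarith
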